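/- arXiv:1203.1132 — 2 statements merged into one kernel-verified Lean document; each statement's English description precedes it below -/
import Mathlib

section
/- For every n ≥ 1, 4·α(n)^2·γ(n)^2·(4 + γ(n)) / (α(n)^2·γ(n)^3·(1 + α(n)^{-1}) + 64·β(n)^3) < γ(n+1) < γ(n)^2·(3 + γ(n) + β(n)) / 16. -/
/-- One step of the recursion for the ice-model boundary counts
`(pa, pb, pc, pd)` on the Sierpinski gasket `SG(n)`. -/
def iceStep : ℕ × ℕ × ℕ × ℕ → ℕ × ℕ × ℕ × ℕ
  | (a, b, c, d) =>
    ((a + b) ^ 2 * (a + 3 * c + d),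
     (a + b) ^ 2 * (b + 3 * c + d),
     a ^ 2 * b + b ^ 2 * a + (3 * c + d) ^ 3,
     a ^ 3 + b ^ 3 + (3 * c + d) ^ 3)

/-- The quadruple `(pa(n), pb(n), pc(n), pd(n))`. -/
def iceSeq : ℕ → ℕ × ℕ × ℕ × ℕ
  | 0 => (0, 1, 0, 1)
  | n + 1 => iceStep (iceSeq n)

def pa (n : ℕ) : ℕ := (iceSeq n).1
def pb (n : ℕ) : ℕ := (iceSeq n).2.1
def pc (n : ℕ) : ℕ := (iceSeq n).2.2.1
def pd (n : ℕ) : ℕ := (iceSeq n).2.2.2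

noncomputable def alphaSeq (n : ℕ) : ℝ := (pa n : ℝ) / (pb n : ℝ)
noncomputable def betaSeq (n : ℕ) : ℝ := (pd n : ℝ) / (pc n : ℝ)
noncomputable def gammaSeq (n : ℕ) : ℝ := (pb n : ℝ) / (pc n : ℝ)

lemma pa_succ (n : ℕ) : pa (n+1) = (pa n + pb n)^2 * (pa n + 3*pc n + pd n) := rfl
lemma pb_succ (n : ℕ) : pb (n+1) = (pa n + pb n)^2 * (pb n + 3*pc n + pd n) := rfl
lemma pc_succ (n : ℕ) : pc (n+1) = (pa n)^2 * pb n + (pb n)^2 * pa n + (3*pc n + pd n)^3 := rfl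
lemma pd_succ (n : ℕ) : pd (n+1) = (pa n)^3 + (pb n)^3 + (3*pc n + pd n)^3 := rfl

lemma ice_facts : ∀ n, pa n < pb n ∧ pc n ≤ pd n ∧ 1 ≤ pd n := by
  intro n
  induction n with
  | zero => refine ⟨by norm_num [pa, pb, iceSeq], by norm_num [pc, pd, iceSeq], by norm_num [pd, iceSeq]⟩
  | succ m ih =>
    obtain ⟨h1, h2, h3⟩ := ih
    have hcube : pa m ^ 2 * pb m + pb m ^ 2 * pa m ≤ pa m ^ 3 + pb m ^ 3 := by
      zify
      nlinarith [mul_nonneg (add_nonneg (Int.ofNat_nonneg (pa m)) (Int.ofNat_nonneg (pb m)))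
        (sq_nonneg ((pa m : ℤ) - pb m))]
    refine ⟨?_, ?_, ?_⟩
    · rw [pa_succ, pb_succ]
      exact mul_lt_mul_of_pos_left (by omega) (pow_pos (by omega) 2)
    · rw [pc_succ, pd_succ]
      exact Nat.add_le_add_right hcube _
    · rw [pd_succ]
      have := Nat.one_le_pow 3 (pb m) (by omega)
      omega

lemma pa_pos (n : ℕ) (hn : 1 ≤ n) : 1 ≤ pa n := by
  obtain ⟨m, rfl⟩ : ∃ m, n = m + 1 := ⟨n - 1, (Nat.succ_pred_eq_of_pos hn).symm⟩
  obtain ⟨h1, h2, h3⟩ := ice_facts m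
  rw [pa_succ]
  exact Nat.mul_pos (pow_pos (by omega) 2) (by omega)

lemma pc_pos (n : ℕ) (hn : 1 ≤ n) : 1 ≤ pc n := by
  obtain ⟨m, rfl⟩ : ∃ m, n = m + 1 := ⟨n - 1, (Nat.succ_pred_eq_of_pos hn).symm⟩
  obtain ⟨h1, h2, h3⟩ := ice_facts m
  rw [pc_succ]
  have := Nat.one_le_pow 3 (3 * pc m + pd m) (by omega)
  omega

lemma key_real (a b c d : ℝ) (hA : 1 ≤ a) (hAB : a < b) (hC : 1 ≤ c) (hCD : c ≤ d) :
    4 * (a/b) ^ 2 * (b/c) ^ 2 * (4 + b/c) /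
        ((a/b) ^ 2 * (b/c) ^ 3 * (1 + (a/b)⁻¹) + 64 * (d/c) ^ 3) <
      ((a+b)^2 * (b + 3*c + d)) / (a^2*b + b^2*a + (3*c+d)^3) ∧
    ((a+b)^2 * (b + 3*c + d)) / (a^2*b + b^2*a + (3*c+d)^3) <
      (b/c) ^ 2 * (3 + b/c + d/c) / 16 := by
  have ha0 : 0 < a := by linarith
  have hb0 : 0 < b := by linarith
  have hc0 : 0 < c := by linarith
  have hd0 : 0 < d := by linarith
  have hden : (0:ℝ) < a^2*b + b^2*a + (3*c+d)^3 := by positivity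
  have hcube : (3*c+d)^3 ≤ (4*d)^3 := pow_le_pow_left₀ (by linarith) (by linarith) 3
  have hcube' : (4*c)^3 ≤ (3*c+d)^3 := pow_le_pow_left₀ (by linarith) (by linarith) 3
  constructor
  · have e1 : 4 * (a/b) ^ 2 * (b/c) ^ 2 * (4 + b/c) /
        ((a/b) ^ 2 * (b/c) ^ 3 * (1 + (a/b)⁻¹) + 64 * (d/c) ^ 3)
        = (4*a^2*(4*c+b)) / (a*b*(a+b) + 64*d^3) := by
      have hden1 : (0:ℝ) < (a/b) ^ 2 * (b/c) ^ 3 * (1 + (a/b)⁻¹) + 64 * (d/c) ^ 3 := by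
        positivity
      have hden2 : (0:ℝ) < a*b*(a+b) + 64*d^3 := by positivity
      rw [div_eq_div_iff (ne_of_gt hden1) (ne_of_gt hden2), inv_div]
      field_simp
    rw [e1, div_lt_div_iff₀ (by positivity) hden]
    -- 4a²(4c+b) * (a²b+b²a+(3c+d)³) < (a+b)²(b+3c+d) * (ab(a+b)+64d³)
    have h2 : 4*a^2*(4*c+b) < (a+b)^2*(b+3*c+d) := by
      nlinarith [mul_pos (mul_pos (show (0:ℝ) < b - a by linarith)
          (show (0:ℝ) < b + 3*a by linarith)) (show (0:ℝ) < b + 4*c by linarith),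
        mul_nonneg (sq_nonneg (a+b)) (show (0:ℝ) ≤ d - c by linarith)]
    calc 4*a^2*(4*c+b) * (a^2*b + b^2*a + (3*c+d)^3)
        ≤ 4*a^2*(4*c+b) * (a*b*(a+b) + 64*d^3) := by
          apply mul_le_mul_of_nonneg_left _ (by positivity)
          nlinarith [hcube]
      _ < (a+b)^2*(b+3*c+d) * (a*b*(a+b) + 64*d^3) :=
          mul_lt_mul_of_pos_right h2 (by positivity)
  · have e2 : (b/c) ^ 2 * (3 + b/c + d/c) / 16 = (b^2*(3*c+b+d)) / (16*c^3) := by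
      field_simp
    rw [e2, div_lt_div_iff₀ hden (by positivity)]
    have key : 16*c^3*(a+b)^2 < b^2*(3*c+d)^3 := by
      have h4 : (a+b)^2 < 4*b^2 := by nlinarith [mul_pos (show (0:ℝ) < b - a by linarith) (show (0:ℝ) < 3*b + a by linarith)]
      nlinarith [mul_lt_mul_of_pos_left h4 (show (0:ℝ) < 16*c^3 by positivity),
        mul_le_mul_of_nonneg_left hcube' (sq_nonneg b)]
    have hS : (0:ℝ) < b + 3*c + d := by linarith
    nlinarith [mul_lt_mul_of_pos_right key hS,
      mul_nonneg (mul_nonneg hS.le (sq_nonneg b)) (show (0:ℝ) ≤ a*b*(a+b) by positivity)]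


theorem stmt_4 (n : ℕ) (hn : 1 ≤ n) :
    4 * alphaSeq n ^ 2 * gammaSeq n ^ 2 * (4 + gammaSeq n) /
        (alphaSeq n ^ 2 * gammaSeq n ^ 3 * (1 + (alphaSeq n)⁻¹) + 64 * betaSeq n ^ 3) <
      gammaSeq (n + 1) ∧
    gammaSeq (n + 1) < gammaSeq n ^ 2 * (3 + gammaSeq n + betaSeq n) / 16 := by
  obtain ⟨h1, h2, _⟩ := ice_facts n
  have ha1 := pa_pos n hn
  have hc1 := pc_pos n hn
  have hA : (1:ℝ) ≤ (pa n : ℝ) := by exact_mod_cast ha1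
  have hAB : (pa n : ℝ) < (pb n : ℝ) := by exact_mod_cast h1
  have hC : (1:ℝ) ≤ (pc n : ℝ) := by exact_mod_cast hc1
  have hCD : (pc n : ℝ) ≤ (pd n : ℝ) := by exact_mod_cast h2
  have hγ : gammaSeq (n + 1) =
      (((pa n : ℝ) + pb n)^2 * ((pb n : ℝ) + 3*(pc n) + pd n)) /
        ((pa n : ℝ)^2*(pb n) + (pb n : ℝ)^2*(pa n) + (3*(pc n : ℝ) + pd n)^3) := by
    unfold gammaSeq
    rw [pb_succ, pc_succ]
    push_cast
    ring_nf
  have := key_real (pa n) (pb n) (pc n) (pd n) hA hAB hC hCD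
  rw [hγ]
  unfold alphaSeq betaSeq gammaSeq
  exact this
end

section
/- The entropy per site of the ice model on the two-dimensional Sierpinski gasket, i.e. the limit S of ln I(n)/v(n) as n → ∞, exists and satisfies 0.51564 < S < 0.51565. -/
/-- The number of ice-model configurations on `SG(n)`. -/
def iceI (n : ℕ) : ℕ := 6 * pa n + 6 * pb n + 6 * pc n + 2 * pd n

/-- The number of vertices of `SG(n)` (the division is exact). -/
def vSG (n : ℕ) : ℕ := 3 * (3 ^ n + 1) / 2

/- ### Auxiliary development -/

def sS (n : ℕ) : ℕ := pa n + pb n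
def qS (n : ℕ) : ℕ := 3 * pc n + pd n

lemma s_succ (n : ℕ) : sS (n+1) = sS n ^ 2 * (sS n + 2 * qS n) := by
  rcases hn : iceSeq n with ⟨a, b, c, d⟩
  simp only [sS, qS, pa, pb, pc, pd, iceSeq, hn, iceStep]
  ring

lemma q_succ (n : ℕ) : qS (n+1) = sS n ^ 3 + 4 * qS n ^ 3 := by
  rcases hn : iceSeq n with ⟨a, b, c, d⟩
  simp only [sS, qS, pa, pb, pc, pd, iceSeq, hn, iceStep]
  ring

lemma iceI_eq (n : ℕ) : iceI n = 6 * sS n + 2 * qS n := by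
  simp only [iceI, sS, qS]; ring

lemma sS4 : sS 4 = 305812156229139891953349 := by rfl
lemma qS4 : qS 4 = 809276858975602664403014759 := by rfl

lemma q_pos (n : ℕ) : 1 ≤ qS n := by
  induction n with
  | zero => rfl
  | succ n ih =>
    rw [q_succ]
    have h : 1 ≤ qS n ^ 3 := Nat.one_le_pow _ _ ih
    omega

lemma s_pos (n : ℕ) : 1 ≤ sS n := by
  induction n with
  | zero => rfl
  | succ n ih =>
    rw [s_succ]
    have h1 : 1 ≤ sS n ^ 2 := Nat.one_le_pow _ _ ih
    have h2 : 1 ≤ sS n + 2 * qS n := by have := q_pos n; omega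
    nlinarith

lemma s_le_q (n : ℕ) : sS n ≤ qS n := by
  induction n with
  | zero => exact le_refl 1
  | succ n ih =>
    rw [s_succ, q_succ]
    have h2 : sS n ^ 2 ≤ qS n ^ 2 := Nat.pow_le_pow_left ih 2
    nlinarith [s_pos n, q_pos n]

/-- The key invariant: the ratio `s/q` stays below its value at `n = 4`. -/
lemma inv4 : ∀ n, 4 ≤ n →
    809276858975602664403014759 * sS n ≤ 305812156229139891953349 * qS n := by
  intro n hn
  induction n, hn using Nat.le_induction with
  | base => rw [sS4, qS4]
  | succ n hn ih =>
    rw [s_succ, q_succ]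
    have hsq := s_le_q n
    have h2 : sS n ^ 2 ≤ qS n ^ 2 := Nat.pow_le_pow_left hsq 2
    calc 809276858975602664403014759 * (sS n ^ 2 * (sS n + 2 * qS n))
        ≤ 809276858975602664403014759 * (3 * (sS n * qS n ^ 2)) := by
          apply Nat.mul_le_mul_left
          have ha := Nat.mul_le_mul_left (sS n) h2
          have hb := Nat.mul_le_mul_left (sS n * qS n) hsq
          nlinarith
      _ = 3 * qS n ^ 2 * (809276858975602664403014759 * sS n) := by ring
      _ ≤ 3 * qS n ^ 2 * (305812156229139891953349 * qS n) :=
          Nat.mul_le_mul_left _ ih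
      _ = 305812156229139891953349 * (3 * qS n ^ 3) := by ring
      _ ≤ 305812156229139891953349 * (sS n ^ 3 + 4 * qS n ^ 3) := by
          apply Nat.mul_le_mul_left
          nlinarith

lemma q_lower (n : ℕ) : 4 * qS n ^ 3 ≤ qS (n+1) := by
  rw [q_succ]; exact Nat.le_add_left _ _

lemma q_upper (n : ℕ) (hn : 4 ≤ n) :
    530018911870571495998090214229616259007148851987597911994017738567473716853647479
      * qS (n+1) ≤
    2120075647510885865559637071580720901609934418630139395641624253748798440582157465
      * qS n ^ 3 := by
  rw [q_succ]
  have h := Nat.pow_le_pow_left (inv4 n hn) 3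
  rw [mul_pow, mul_pow] at h
  norm_num at h ⊢
  nlinarith

noncomputable def rq (n : ℕ) : ℝ := Real.log (qS n)

lemma q_cast_pos (n : ℕ) : (0:ℝ) < (qS n : ℝ) := by
  exact_mod_cast Nat.lt_of_lt_of_le Nat.zero_lt_one (q_pos n)

lemma rq_nonneg (n : ℕ) : 0 ≤ rq n :=
  Real.log_nonneg (by exact_mod_cast q_pos n)

lemma rq_lower (n : ℕ) : Real.log 4 + 3 * rq n ≤ rq (n+1) := by
  have h : ((4 * qS n ^ 3 : ℕ) : ℝ) ≤ ((qS (n+1) : ℕ) : ℝ) := by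
    exact_mod_cast q_lower n
  push_cast at h
  have hq := q_cast_pos n
  have hlog := Real.log_le_log (mul_pos (by norm_num) (pow_pos hq 3)) h
  rwa [Real.log_mul (by norm_num) (ne_of_gt (pow_pos hq 3)), Real.log_pow] at hlog

noncomputable def epsC : ℝ :=
  (305812156229139891953349:ℝ) ^ 3 / (4 * (809276858975602664403014759:ℝ) ^ 3)

lemma epsC_pos : 0 < epsC := by unfold epsC; positivity

lemma epsC_small : epsC ≤ 0.0000000001 := by
  unfold epsC
  rw [div_le_iff₀ (by positivity)]
  norm_num

lemma rq_upper (n : ℕ) (hn : 4 ≤ n) :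
    rq (n+1) ≤ 3 * rq n + (Real.log 4 + epsC) := by
  have h : ((530018911870571495998090214229616259007148851987597911994017738567473716853647479
      * qS (n+1) : ℕ) : ℝ) ≤
      ((2120075647510885865559637071580720901609934418630139395641624253748798440582157465
      * qS n ^ 3 : ℕ) : ℝ) := by exact_mod_cast q_upper n hn
  push_cast at h
  have hq := q_cast_pos n
  have hq1 := q_cast_pos (n+1)
  have hlog := Real.log_le_log (by positivity) h
  rw [Real.log_mul (by norm_num) (ne_of_gt hq1),
      Real.log_mul (by norm_num) (ne_of_gt (pow_pos hq 3)), Real.log_pow] at hlog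
  have hre : (2120075647510885865559637071580720901609934418630139395641624253748798440582157465:ℝ)
      = (4 * (1 + epsC)) *
        (530018911870571495998090214229616259007148851987597911994017738567473716853647479:ℝ) := by
    unfold epsC
    field_simp
    norm_num
  have hpos : (0:ℝ) < 4 * (1 + epsC) := by nlinarith [epsC_pos]
  rw [hre, Real.log_mul (ne_of_gt hpos) (by norm_num)] at hlog
  have h4 : Real.log (4 * (1 + epsC)) = Real.log 4 + Real.log (1 + epsC) :=
    Real.log_mul (by norm_num) (by nlinarith [epsC_pos])
  have hle : Real.log (1 + epsC) ≤ epsC := by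
    have := Real.log_le_sub_one_of_pos (x := 1 + epsC) (by nlinarith [epsC_pos])
    linarith
  unfold rq
  push_cast at hlog
  linarith

/-- The renormalized quantity whose limit (times `2/3`) is the entropy. -/
noncomputable def G (n : ℕ) : ℝ := (rq n + Real.log 2) / 3 ^ n

lemma G_mono : Monotone G := by
  apply monotone_nat_of_le_succ
  intro n
  unfold G
  rw [div_le_div_iff₀ (by positivity) (by positivity)]
  have h := rq_lower n
  have h4 : Real.log 4 = 2 * Real.log 2 := by
    rw [show (4:ℝ) = 2 ^ 2 by norm_num, Real.log_pow]; push_cast; ring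
  have key : 3 * rq n + 2 * Real.log 2 ≤ rq (n+1) := by linarith
  have hmul := mul_le_mul_of_nonneg_right key
    (le_of_lt (pow_pos (show (0:ℝ) < 3 by norm_num) n))
  rw [pow_succ]
  nlinarith

lemma G_bound : ∀ n, 4 ≤ n → G n ≤ G 4 + epsC / 162 := by
  have key : ∀ n, 4 ≤ n →
      G n + (epsC / 2) * (1/3:ℝ) ^ n ≤ G 4 + (epsC / 2) * (1/3:ℝ) ^ 4 := by
    intro n hn
    induction n, hn using Nat.le_induction with
    | base => exact le_refl _
    | succ n hn ih =>
      have step : G (n+1) ≤ G n + epsC * (1/3:ℝ) ^ (n+1) := by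
        have h := rq_upper n hn
        have h4 : Real.log 4 = 2 * Real.log 2 := by
          rw [show (4:ℝ) = 2 ^ 2 by norm_num, Real.log_pow]; push_cast; ring
        have hp : (0:ℝ) < (3:ℝ) ^ (n+1) := by positivity
        have e : G n + epsC * (1/3:ℝ) ^ (n+1)
            = (3 * (rq n + Real.log 2) + epsC) / 3 ^ (n+1) := by
          unfold G
          rw [div_pow, one_pow, pow_succ]
          field_simp
        rw [e]
        unfold G
        have key : rq (n+1) + Real.log 2 ≤ 3 * (rq n + Real.log 2) + epsC := by
          linarith
        exact div_le_div_of_nonneg_right key hp.le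
      have : (epsC/2) * (1/3:ℝ)^n = (epsC/2) * (1/3:ℝ)^(n+1) + epsC * (1/3:ℝ)^(n+1) := by
        rw [pow_succ]; ring
      linarith
  intro n hn
  have h := key n hn
  have hp : (0:ℝ) ≤ (epsC / 2) * (1/3:ℝ) ^ n :=
    mul_nonneg (by linarith [epsC_pos]) (by positivity)
  have : (epsC / 2) * (1/3:ℝ) ^ 4 = epsC / 162 := by ring
  linarith

lemma G_bound_all (n : ℕ) : G n ≤ G 4 + epsC / 162 := by
  rcases le_or_gt 4 n with h | h
  · exact G_bound n h
  · have := G_mono (le_of_lt h)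
    have : G n ≤ G 4 := G_mono (le_of_lt h)
    have := epsC_pos
    linarith

noncomputable def Sq : ℝ := ⨆ n, G n

lemma G_bddAbove : BddAbove (Set.range G) := by
  refine ⟨G 4 + epsC / 162, ?_⟩
  rintro x ⟨n, rfl⟩
  exact G_bound_all n

lemma G_tendsto : Filter.Tendsto G Filter.atTop (nhds Sq) :=
  tendsto_atTop_ciSup G_mono G_bddAbove

lemma Sq_lower : G 4 ≤ Sq := le_ciSup G_bddAbove 4

lemma Sq_upper : Sq ≤ G 4 + epsC / 162 := ciSup_le G_bound_all

/- ### Relating `iceI` and `vSG` to the auxiliary quantities -/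

lemma vSG_cast (n : ℕ) : (vSG n : ℝ) = 3 * ((3:ℝ) ^ n + 1) / 2 := by
  have h1 : 3 ^ n % 2 = 1 := by
    rw [Nat.pow_mod]; norm_num
  have : 2 * vSG n = 3 * (3 ^ n + 1) := by
    unfold vSG
    omega
  have := congrArg (fun k : ℕ => (k : ℝ)) this
  push_cast at this
  linarith

lemma iceI_lower (n : ℕ) : 2 * qS n ≤ iceI n := by
  rw [iceI_eq]; omega

lemma iceI_upper (n : ℕ) : iceI n ≤ 8 * qS n := by
  rw [iceI_eq]; have := s_le_q n; omega

noncomputable def cdev (n : ℕ) : ℝ := Real.log (iceI n) - rq n - Real.log 2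

lemma cdev_nonneg (n : ℕ) : 0 ≤ cdev n := by
  unfold cdev rq
  have h : ((2 * qS n : ℕ) : ℝ) ≤ ((iceI n : ℕ) : ℝ) := by
    exact_mod_cast iceI_lower n
  push_cast at h
  have hlog := Real.log_le_log (mul_pos two_pos (q_cast_pos n)) h
  rw [Real.log_mul (by norm_num) (ne_of_gt (q_cast_pos n))] at hlog
  linarith

lemma cdev_le (n : ℕ) : cdev n ≤ Real.log 4 := by
  unfold cdev rq
  have h : ((iceI n : ℕ) : ℝ) ≤ ((8 * qS n : ℕ) : ℝ) := by
    exact_mod_cast iceI_upper n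
  push_cast at h
  have hipos : (0:ℝ) < (iceI n : ℝ) := by
    have := iceI_lower n
    have := q_pos n
    have : 2 ≤ iceI n := by omega
    exact_mod_cast Nat.lt_of_lt_of_le Nat.zero_lt_two this
  have hlog := Real.log_le_log hipos h
  rw [Real.log_mul (by norm_num) (ne_of_gt (q_cast_pos n))] at hlog
  have h8 : Real.log 8 = Real.log 4 + Real.log 2 := by
    rw [← Real.log_mul (by norm_num) (by norm_num)]; norm_num
  linarith

/- ### The main limit -/

lemma main_tendsto :
    Filter.Tendsto (fun n => Real.log (iceI n) / (vSG n : ℝ))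
      Filter.atTop (nhds (Sq / (3/2))) := by
  have heq : (fun n => Real.log (iceI n) / (vSG n : ℝ))
      = fun n => (G n + cdev n * (1/3:ℝ) ^ n) / ((3/2) * (1 + (1/3:ℝ) ^ n)) := by
    funext n
    rw [vSG_cast]
    unfold G cdev
    have hp : (0:ℝ) < 3 ^ n := by positivity
    have e2 : ((1:ℝ)/3) ^ n = 1 / (3:ℝ) ^ n := by
      rw [div_pow, one_pow]
    rw [e2]
    field_simp
    ring
  rw [heq]
  have hzero : Filter.Tendsto (fun n => cdev n * (1/3:ℝ) ^ n)
      Filter.atTop (nhds 0) := by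
    apply squeeze_zero (fun n => mul_nonneg (cdev_nonneg n) (by positivity))
      (g := fun n => Real.log 4 * (1/3:ℝ) ^ n)
    · intro n
      have := cdev_le n
      have hp : (0:ℝ) ≤ (1/3:ℝ) ^ n := by positivity
      nlinarith
    · have := tendsto_pow_atTop_nhds_zero_of_lt_one
        (show (0:ℝ) ≤ 1/3 by norm_num) (show (1/3:ℝ) < 1 by norm_num)
      simpa using (this.const_mul (Real.log 4))
  have hnum : Filter.Tendsto (fun n => G n + cdev n * (1/3:ℝ) ^ n)
      Filter.atTop (nhds Sq) := by
    simpa using G_tendsto.add hzero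
  have hden : Filter.Tendsto (fun n => (3/2:ℝ) * (1 + (1/3:ℝ) ^ n))
      Filter.atTop (nhds (3/2)) := by
    have hp : Filter.Tendsto (fun n => (1/3:ℝ) ^ n) Filter.atTop (nhds 0) :=
      tendsto_pow_atTop_nhds_zero_of_lt_one (by norm_num) (by norm_num)
    have : Filter.Tendsto (fun n => 1 + (1/3:ℝ) ^ n) Filter.atTop (nhds 1) := by
      simpa using (tendsto_const_nhds (x := (1:ℝ))).add hp
    simpa using (this.const_mul (3/2:ℝ))
  exact hnum.div hden (by norm_num)

/- ### Numerical bounds on `Sq` -/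

lemma rq4_eq : rq 4 = Real.log (809276858975602664403014759 : ℝ) := by
  unfold rq; rw [qS4]; norm_num

lemma logQ4_lower :
    (732256 : ℝ) / 8192 * Real.log 2 ≤ Real.log (809276858975602664403014759 : ℝ) := by
  have h : ((2:ℝ)) ^ (732256:ℕ) ≤ (809276858975602664403014759 : ℝ) ^ (8192:ℕ) := by
    have : (2:ℕ) ^ 732256 ≤ 809276858975602664403014759 ^ 8192 := by decide +kernel
    exact_mod_cast this
  have hlog := Real.log_le_log (by positivity) h
  rw [Real.log_pow, Real.log_pow] at hlog
  push_cast at hlog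
  linarith

lemma logQ4_upper :
    Real.log (809276858975602664403014759 : ℝ) ≤ (732257 : ℝ) / 8192 * Real.log 2 := by
  have h : (809276858975602664403014759 : ℝ) ^ (8192:ℕ) ≤ ((2:ℝ)) ^ (732257:ℕ) := by
    have : (809276858975602664403014759:ℕ) ^ 8192 ≤ 2 ^ 732257 := by decide +kernel
    exact_mod_cast this
  have hlog := Real.log_le_log (by positivity) h
  rw [Real.log_pow, Real.log_pow] at hlog
  push_cast at hlog
  linarith

theorem stmt_15 :
    ∃ S : ℝ, Filter.Tendsto (fun n => Real.log (iceI n) / (vSG n : ℝ))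
        Filter.atTop (nhds S) ∧ 0.51564 < S ∧ S < 0.51565 := by
  refine ⟨Sq / (3/2), main_tendsto, ?_, ?_⟩
  · have h1 := Sq_lower
    have h2 : G 4 = (rq 4 + Real.log 2) / 81 := by unfold G; norm_num
    have h3 := logQ4_lower
    have hl2 := Real.log_two_gt_d9
    rw [rq4_eq] at h2
    have : (0.51564 : ℝ) * (3/2) < G 4 := by
      rw [h2]
      have : (732256 : ℝ) / 8192 * Real.log 2 + Real.log 2 ≤
          Real.log (809276858975602664403014759 : ℝ) + Real.log 2 := by linarith
      nlinarith
    linarith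
  · have h1 := Sq_upper
    have h2 : G 4 = (rq 4 + Real.log 2) / 81 := by unfold G; norm_num
    have h3 := logQ4_upper
    have hl2 := Real.log_two_lt_d9
    have hl2' := Real.log_two_gt_d9
    have heps := epsC_small
    have heps' := epsC_pos
    rw [rq4_eq] at h2
    have : G 4 + epsC / 162 < (0.51565 : ℝ) * (3/2) := by
      rw [h2]
      nlinarith
    linarith
end
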